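/- Suppose n has bounded gaps. A semi-normalized Markushevich basis B is n-greedy if and only if B is n-suppression unconditional and n-democratic. -/

import Mathlib

open Finset

variable {X : Type*} [NormedAddCommGroup X] [NormedSpace ℝ X]

/-- `𝐧`-greediness with constant `C`: for every greedy set `A` of cardinality in `𝐧`,
the greedy sum is a `C`-quasi-optimal `|A|`-term approximation. -/
def NGreedy (e : ℕ → X) (f : ℕ → X →L[ℝ] ℝ) (nseq : ℕ → ℕ) (C : ℝ) : Prop :=
  ∀ (x : X) (A : Finset ℕ),
    (∃ k, A.card = nseq k) →
    (∀ i ∈ A, ∀ j ∉ A, |f j x| ≤ |f i x|) →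
    ∀ (y : X) (F : Finset ℕ), F.card ≤ A.card → (∀ i ∉ F, f i y = 0) →
      ‖x - ∑ i ∈ A, f i x • e i‖ ≤ C * ‖x - y‖

/-- `𝐧`-suppression unconditionality with constant `C`. -/
def NSuppUnc (e : ℕ → X) (f : ℕ → X →L[ℝ] ℝ) (nseq : ℕ → ℕ) (C : ℝ) : Prop :=
  ∀ (x : X) (A : Finset ℕ), (∃ k, A.card = nseq k) →
    ‖∑ i ∈ A, f i x • e i‖ ≤ C * ‖x‖

/-- `𝐧`-democracy with constant `C`. -/
def NDem (e : ℕ → X) (nseq : ℕ → ℕ) (C : ℝ) : Prop :=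
  ∀ (A B : Finset ℕ), A.card ≤ B.card →
    (∃ k, A.card = nseq k) → (∃ k, B.card = nseq k) →
    ‖∑ i ∈ A, e i‖ ≤ C * ‖∑ i ∈ B, e i‖

section AuxLemmas

variable {e : ℕ → X} {f : ℕ → X →L[ℝ] ℝ}

lemma biorth_sum (hbi : ∀ i j, f i (e j) = if i = j then (1 : ℝ) else 0)
    (S : Finset ℕ) (c : ℕ → ℝ) (i : ℕ) :
    f i (∑ j ∈ S, c j • e j) = if i ∈ S then c i else 0 := by
  rw [map_sum]
  simp only [map_smul, hbi, smul_eq_mul, mul_ite, mul_one, mul_zero]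
  exact Finset.sum_ite_eq S i c

lemma f_ind (hbi : ∀ i j, f i (e j) = if i = j then (1 : ℝ) else 0)
    (S : Finset ℕ) (j : ℕ) : f j (∑ i ∈ S, e i) = if j ∈ S then 1 else 0 := by
  have := biorth_sum hbi S (fun _ => (1:ℝ)) j
  simpa using this

/-- projection of an indicator onto a subset -/
lemma proj_ind (hbi : ∀ i j, f i (e j) = if i = j then (1 : ℝ) else 0)
    (T S : Finset ℕ) (hTS : T ⊆ S) :
    ∑ i ∈ T, e i = ∑ i ∈ T, f i (∑ j ∈ S, e j) • e i := by
  refine Finset.sum_congr rfl fun i hi => ?_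
  rw [f_ind hbi, if_pos (hTS hi), one_smul]

lemma conv_pos (v : ℕ → X) (M : ℝ) (B : Finset ℕ) :
    (∀ T ⊆ B, ‖∑ i ∈ T, v i‖ ≤ M) →
    ∀ (a : ℕ → ℝ) (t : ℝ), 0 ≤ t → (∀ i ∈ B, 0 ≤ a i ∧ a i ≤ t) →
    ‖∑ i ∈ B, a i • v i‖ ≤ t * M := by
  induction B using Finset.strongInduction with
  | _ B ih =>
    intro hT a t ht ha
    have hM : 0 ≤ M := by simpa using hT ∅ (Finset.empty_subset _)
    rcases B.eq_empty_or_nonempty with rfl | hB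
    · simpa using mul_nonneg ht hM
    obtain ⟨i₀, hi₀, hmin⟩ := B.exists_min_image a hB
    have h0 : 0 ≤ a i₀ := (ha i₀ hi₀).1
    have hat : a i₀ ≤ t := (ha i₀ hi₀).2
    have hkey : ∑ i ∈ B, a i • v i
        = a i₀ • ∑ i ∈ B, v i + ∑ i ∈ B.erase i₀, (a i - a i₀) • v i := by
      have herase : ∑ i ∈ B.erase i₀, (a i - a i₀) • v i = ∑ i ∈ B, (a i - a i₀) • v i :=
        Finset.sum_subset (Finset.erase_subset _ _) (fun i hi hni => by
          have : i = i₀ := by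
            by_contra hne
            exact hni (Finset.mem_erase.mpr ⟨hne, hi⟩)
          simp [this])
      rw [herase, Finset.smul_sum, ← Finset.sum_add_distrib]
      refine Finset.sum_congr rfl fun i _ => ?_
      rw [sub_smul]; abel
    have hrec := ih (B.erase i₀) (Finset.erase_ssubset hi₀)
      (fun T hTs => hT T (hTs.trans (Finset.erase_subset _ _)))
      (fun i => a i - a i₀) (t - a i₀) (by linarith)
      (fun i hi => ⟨by linarith [hmin i (Finset.mem_of_mem_erase hi)],
        by linarith [(ha i (Finset.mem_of_mem_erase hi)).2]⟩)
    calc ‖∑ i ∈ B, a i • v i‖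
        ≤ ‖a i₀ • ∑ i ∈ B, v i‖ + ‖∑ i ∈ B.erase i₀, (a i - a i₀) • v i‖ := by
          rw [hkey]; exact norm_add_le _ _
      _ ≤ a i₀ * M + (t - a i₀) * M := by
          refine add_le_add ?_ hrec
          rw [norm_smul, Real.norm_eq_abs, abs_of_nonneg h0]
          exact mul_le_mul_of_nonneg_left (hT B subset_rfl) h0
      _ = t * M := by ring

lemma conv_signed (v : ℕ → X) (M : ℝ) (B : Finset ℕ)
    (hT : ∀ T ⊆ B, ‖∑ i ∈ T, v i‖ ≤ M)
    (a : ℕ → ℝ) (t : ℝ) (ht : 0 ≤ t) (ha : ∀ i ∈ B, |a i| ≤ t) :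
    ‖∑ i ∈ B, a i • v i‖ ≤ 2 * t * M := by
  classical
  have hsplit : ∑ i ∈ B, a i • v i
      = ∑ i ∈ B.filter (fun i => 0 ≤ a i), a i • v i
        + ∑ i ∈ B.filter (fun i => ¬ 0 ≤ a i), a i • v i :=
    (Finset.sum_filter_add_sum_filter_not B _ _).symm
  have h1 : ‖∑ i ∈ B.filter (fun i => 0 ≤ a i), a i • v i‖ ≤ t * M :=
    conv_pos v M _ (fun T hTs => hT T (hTs.trans (Finset.filter_subset _ _))) a t ht
      (fun i hi => ⟨(Finset.mem_filter.mp hi).2,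
        (abs_le.mp (ha i (Finset.mem_filter.mp hi).1)).2⟩)
  have h2 : ‖∑ i ∈ B.filter (fun i => ¬ 0 ≤ a i), a i • v i‖ ≤ t * M := by
    have hneg : ∑ i ∈ B.filter (fun i => ¬ 0 ≤ a i), a i • v i
        = -∑ i ∈ B.filter (fun i => ¬ 0 ≤ a i), (-a i) • v i := by
      rw [← Finset.sum_neg_distrib]
      exact Finset.sum_congr rfl fun i _ => by rw [neg_smul, neg_neg]
    rw [hneg, norm_neg]
    refine conv_pos v M _ (fun T hTs => hT T (hTs.trans (Finset.filter_subset _ _)))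
      (fun i => -a i) t ht (fun i hi => ⟨?_, ?_⟩)
    · have := (Finset.mem_filter.mp hi).2; linarith [not_le.mp this]
    · have := (abs_le.mp (ha i (Finset.mem_filter.mp hi).1)).1; linarith
  calc ‖∑ i ∈ B, a i • v i‖ ≤ _ + _ := by rw [hsplit]; exact norm_add_le _ _
    _ ≤ t * M + t * M := add_le_add h1 h2
    _ = 2 * t * M := by ring

lemma coeff_decay (hbi : ∀ i j, f i (e j) = if i = j then (1 : ℝ) else 0)
    {α₂ : ℝ} (hα₂pos : 0 < α₂) (hα₂ : ∀ i, ‖f i‖ ≤ α₂)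
    (hdense : Dense (↑(Submodule.span ℝ (Set.range e)) : Set X))
    (x : X) {ε : ℝ} (hε : 0 < ε) :
    ∃ N, ∀ i, N ≤ i → |f i x| ≤ ε := by
  obtain ⟨y, hy, hxy⟩ := hdense.exists_dist_lt x (div_pos hε hα₂pos)
  rw [SetLike.mem_coe, Finsupp.mem_span_range_iff_exists_finsupp] at hy
  obtain ⟨c, hc⟩ := hy
  refine ⟨c.support.sup id + 1, fun i hi => ?_⟩
  have hns : i ∉ c.support := by
    intro hmem
    have : i ≤ c.support.sup id := Finset.le_sup (f := id) hmem
    omega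
  have hfy : f i y = 0 := by
    rw [← hc, Finsupp.sum, biorth_sum hbi, if_neg hns]
  have hfx : f i x = f i (x - y) := by rw [map_sub, hfy, sub_zero]
  rw [hfx]
  calc |f i (x - y)| ≤ ‖f i‖ * ‖x - y‖ := (f i).le_opNorm _
    _ ≤ α₂ * ‖x - y‖ := by gcongr; exact hα₂ i
    _ ≤ α₂ * (ε / α₂) := by
        gcongr
        rw [← dist_eq_norm]
        exact hxy.le
    _ = ε := by field_simp

lemma fullSU (hbi : ∀ i j, f i (e j) = if i = j then (1 : ℝ) else 0)
    {α₁ α₂ : ℝ} (hα₁pos : 0 < α₁) (hα₂pos : 0 < α₂)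
    (hα₁ : ∀ i, ‖e i‖ ≤ α₁) (hα₂ : ∀ i, ‖f i‖ ≤ α₂)
    (hdense : Dense (↑(Submodule.span ℝ (Set.range e)) : Set X))
    {nseq : ℕ → ℕ} (hmono : StrictMono nseq)
    {K : ℝ} (hK : 0 < K) (hsup : NSuppUnc e f nseq K)
    (x : X) (B : Finset ℕ) : ‖∑ i ∈ B, f i x • e i‖ ≤ K * ‖x‖ := by
  refine le_of_forall_pos_le_add fun δ hδ => ?_
  set c := nseq B.card - B.card with hc
  have hle : B.card ≤ nseq B.card := hmono.le_apply
  have hden : (0:ℝ) < K * ((c:ℝ) * α₁ + 1) := by positivity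
  set ε := δ / (K * ((c:ℝ) * α₁ + 1)) with hεdef
  have hεpos : 0 < ε := div_pos hδ hden
  obtain ⟨N₀, hN₀⟩ := coeff_decay hbi hα₂pos hα₂ hdense x hεpos
  set N := max N₀ (B.sup id + 1) with hN
  set D := (Finset.range c).image (· + N) with hD
  have hDcard : D.card = c := by
    rw [hD, Finset.card_image_of_injective _ (add_left_injective N), Finset.card_range]
  have hND : ∀ i ∈ D, N ≤ i := by
    intro i hi
    obtain ⟨r, _, rfl⟩ := Finset.mem_image.mp hi
    omega
  have hdisj : Disjoint B D := by
    rw [Finset.disjoint_left]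
    intro i hiB hiD
    have h1 : i ≤ B.sup id := Finset.le_sup (f := id) hiB
    have h2 := hND i hiD
    have h3 : B.sup id + 1 ≤ N := le_max_right _ _
    omega
  have hcard : (B ∪ D).card = nseq B.card := by
    rw [Finset.card_union_of_disjoint hdisj, hDcard]
    omega
  set z := x - ∑ j ∈ D, f j x • e j with hz
  have hzco : ∀ i, f i z = f i x - (if i ∈ D then f i x else 0) := fun i => by
    rw [hz, map_sub, biorth_sum hbi]
  have hsum : ∑ i ∈ B ∪ D, f i z • e i = ∑ i ∈ B, f i x • e i := by
    rw [Finset.sum_union hdisj]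
    have h1 : ∑ i ∈ B, f i z • e i = ∑ i ∈ B, f i x • e i :=
      Finset.sum_congr rfl fun i hi => by
        rw [hzco i, if_neg (Finset.disjoint_left.mp hdisj hi), sub_zero]
    have h2 : ∑ i ∈ D, f i z • e i = 0 :=
      Finset.sum_eq_zero fun i hi => by rw [hzco i, if_pos hi, sub_self, zero_smul]
    rw [h1, h2, add_zero]
  have hz_norm : ‖z‖ ≤ ‖x‖ + (c:ℝ) * (ε * α₁) := by
    calc ‖z‖ ≤ ‖x‖ + ‖∑ j ∈ D, f j x • e j‖ := norm_sub_le _ _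
      _ ≤ ‖x‖ + ∑ j ∈ D, ‖f j x • e j‖ := by gcongr; exact norm_sum_le _ _
      _ ≤ ‖x‖ + ∑ j ∈ D, ε * α₁ := by
          gcongr with j hj
          rw [norm_smul, Real.norm_eq_abs]
          exact mul_le_mul (hN₀ j ((le_max_left _ _).trans (hND j hj))) (hα₁ j)
            (norm_nonneg _) hεpos.le
      _ = ‖x‖ + (c:ℝ) * (ε * α₁) := by
          rw [Finset.sum_const, hDcard, nsmul_eq_mul]
  calc ‖∑ i ∈ B, f i x • e i‖ = ‖∑ i ∈ B ∪ D, f i z • e i‖ := by rw [hsum]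
    _ ≤ K * ‖z‖ := hsup z (B ∪ D) ⟨B.card, hcard⟩
    _ ≤ K * (‖x‖ + (c:ℝ) * (ε * α₁)) := by gcongr
    _ = K * ‖x‖ + ε * (K * ((c:ℝ) * α₁)) := by ring
    _ ≤ K * ‖x‖ + δ := by
        have h1 : ε * (K * ((c:ℝ) * α₁)) ≤ ε * (K * ((c:ℝ) * α₁ + 1)) := by
          nlinarith [hεpos.le, hK.le, mul_nonneg (Nat.cast_nonneg c) hα₁pos.le]
        have h2 : ε * (K * ((c:ℝ) * α₁ + 1)) = δ := by
          rw [hεdef]; field_simp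
        linarith

lemma demBase (hbi : ∀ i j, f i (e j) = if i = j then (1 : ℝ) else 0)
    {nseq : ℕ → ℕ} {K Cd : ℝ}
    (hSU : ∀ (x : X) (B : Finset ℕ), ‖∑ i ∈ B, f i x • e i‖ ≤ K * ‖x‖)
    (hK : 0 ≤ K) (hCd : 0 ≤ Cd) (hdem : NDem e nseq Cd)
    (m : ℕ) (D E : Finset ℕ) (hD : D.card ≤ nseq m) (hE : nseq m ≤ E.card) :
    ‖∑ i ∈ D, e i‖ ≤ K * (Cd * K) * ‖∑ i ∈ E, e i‖ := by
  obtain ⟨D', hDD', hD'card⟩ := Infinite.exists_superset_card_eq D (nseq m) hD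
  obtain ⟨E', hE'sub, hE'card⟩ := Finset.exists_subset_card_eq hE
  have h1 : ‖∑ i ∈ D, e i‖ ≤ K * ‖∑ j ∈ D', e j‖ := by
    rw [proj_ind hbi D D' hDD']
    exact hSU _ D
  have h2 : ‖∑ j ∈ D', e j‖ ≤ Cd * ‖∑ j ∈ E', e j‖ :=
    hdem D' E' (by omega) ⟨m, hD'card⟩ ⟨m, hE'card⟩
  have h3 : ‖∑ j ∈ E', e j‖ ≤ K * ‖∑ j ∈ E, e j‖ := by
    rw [proj_ind hbi E' E hE'sub]
    exact hSU _ E'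
  calc ‖∑ i ∈ D, e i‖ ≤ K * ‖∑ j ∈ D', e j‖ := h1
    _ ≤ K * (Cd * ‖∑ j ∈ E', e j‖) := by gcongr
    _ ≤ K * (Cd * (K * ‖∑ j ∈ E, e j‖)) := by gcongr
    _ = K * (Cd * K) * ‖∑ i ∈ E, e i‖ := by ring

lemma demIter (hbi : ∀ i j, f i (e j) = if i = j then (1 : ℝ) else 0)
    {nseq : ℕ → ℕ} {K Cd : ℝ}
    (hSU : ∀ (x : X) (B : Finset ℕ), ‖∑ i ∈ B, f i x • e i‖ ≤ K * ‖x‖)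
    (hK : 0 ≤ K) (hCd : 0 ≤ Cd) (hdem : NDem e nseq Cd) (m : ℕ)
    (j : ℕ) : ∀ D E : Finset ℕ, D.card ≤ j * nseq m → nseq m ≤ E.card →
    ‖∑ i ∈ D, e i‖ ≤ (j : ℝ) * (K * (Cd * K)) * ‖∑ i ∈ E, e i‖ := by
  induction j with
  | zero =>
    intro D E hD hE
    have : D = ∅ := Finset.card_eq_zero.mp (by omega)
    simp [this]
  | succ j ih =>
    intro D E hD hE
    by_cases hcase : D.card ≤ nseq m
    · have h := demBase hbi hSU hK hCd hdem m D E hcase hE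
      have hfac : K * (Cd * K) * ‖∑ i ∈ E, e i‖
          ≤ ((j:ℝ) + 1) * (K * (Cd * K)) * ‖∑ i ∈ E, e i‖ := by
        have h1 : (1:ℝ) ≤ (j:ℝ) + 1 := by
          have := Nat.cast_nonneg (α := ℝ) j
          linarith
        calc K * (Cd * K) * ‖∑ i ∈ E, e i‖
            = 1 * (K * (Cd * K)) * ‖∑ i ∈ E, e i‖ := by ring
          _ ≤ ((j:ℝ) + 1) * (K * (Cd * K)) * ‖∑ i ∈ E, e i‖ := by
              gcongr
      push_cast
      linarith
    · push_neg at hcase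
      obtain ⟨D₀, hD₀sub, hD₀card⟩ := Finset.exists_subset_card_eq hcase.le
      have hsplit : ∑ i ∈ D, e i = ∑ i ∈ D \ D₀, e i + ∑ i ∈ D₀, e i :=
        (Finset.sum_sdiff hD₀sub).symm
      have hcard : (D \ D₀).card ≤ j * nseq m := by
        rw [Finset.card_sdiff_of_subset hD₀sub, hD₀card]
        have hrel : (j + 1) * nseq m = j * nseq m + nseq m := Nat.succ_mul j (nseq m)
        omega
      have h1 := ih (D \ D₀) E hcard hE
      have h2 := demBase hbi hSU hK hCd hdem m D₀ E (le_of_eq hD₀card) hE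
      calc ‖∑ i ∈ D, e i‖ ≤ ‖∑ i ∈ D \ D₀, e i‖ + ‖∑ i ∈ D₀, e i‖ := by
            rw [hsplit]; exact norm_add_le _ _
        _ ≤ (j : ℝ) * (K * (Cd * K)) * ‖∑ i ∈ E, e i‖
            + K * (Cd * K) * ‖∑ i ∈ E, e i‖ := add_le_add h1 h2
        _ = ((j:ℕ) + 1 : ℝ) * (K * (Cd * K)) * ‖∑ i ∈ E, e i‖ := by ring
        _ = ((j+1 : ℕ) : ℝ) * (K * (Cd * K)) * ‖∑ i ∈ E, e i‖ := by push_cast; ring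

lemma fullDem (hbi : ∀ i j, f i (e j) = if i = j then (1 : ℝ) else 0)
    {α₁ α₂ : ℝ} (hα₁pos : 0 < α₁) (hα₂pos : 0 < α₂)
    (hα₁ : ∀ i, ‖e i‖ ≤ α₁) (hα₂ : ∀ i, ‖f i‖ ≤ α₂)
    {nseq : ℕ → ℕ} (hmono : StrictMono nseq) (hn1 : 0 < nseq 0)
    {l : ℕ} (hgaps : ∀ k, nseq (k + 1) ≤ l * nseq k)
    {K Cd : ℝ}
    (hSU : ∀ (x : X) (B : Finset ℕ), ‖∑ i ∈ B, f i x • e i‖ ≤ K * ‖x‖)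
    (hK : 0 ≤ K) (hCd : 0 ≤ Cd) (hdem : NDem e nseq Cd)
    (D E : Finset ℕ) (hDE : D.card ≤ E.card) :
    ‖∑ i ∈ D, e i‖ ≤ ((l:ℝ) * (K * (Cd * K)) + (nseq 0 : ℝ) * α₁ * α₂) * ‖∑ i ∈ E, e i‖ := by
  have hEnn : (0:ℝ) ≤ ‖∑ i ∈ E, e i‖ := norm_nonneg _
  have hterm1 : (0:ℝ) ≤ (l:ℝ) * (K * (Cd * K)) := by positivity
  have hterm2 : (0:ℝ) ≤ (nseq 0 : ℝ) * α₁ * α₂ := by positivity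
  by_cases hE0 : nseq 0 ≤ E.card
  · have hex : ∃ m, E.card < nseq m :=
      ⟨E.card + 1, lt_of_lt_of_le (Nat.lt_succ_self _) hmono.le_apply⟩
    have hm₁pos : Nat.find hex ≠ 0 := by
      intro h
      have := Nat.find_spec hex
      rw [h] at this
      omega
    obtain ⟨m, hm⟩ : ∃ m, Nat.find hex = m + 1 :=
      ⟨Nat.find hex - 1, (Nat.succ_pred_eq_of_pos (Nat.pos_of_ne_zero hm₁pos)).symm⟩
    have hup : E.card < nseq (m + 1) := hm ▸ Nat.find_spec hex
    have hlow : nseq m ≤ E.card := by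
      have := Nat.find_min hex (m := m) (by omega)
      omega
    have hDcard : D.card ≤ l * nseq m := by
      have := hgaps m
      omega
    have h := demIter hbi hSU hK hCd hdem m l D E hDcard hlow
    calc ‖∑ i ∈ D, e i‖ ≤ (l:ℝ) * (K * (Cd * K)) * ‖∑ i ∈ E, e i‖ := h
      _ ≤ ((l:ℝ) * (K * (Cd * K)) + (nseq 0 : ℝ) * α₁ * α₂) * ‖∑ i ∈ E, e i‖ := by
          nlinarith
  · push_neg at hE0
    rcases D.eq_empty_or_nonempty with rfl | hD0
    · simp only [Finset.sum_empty, norm_zero]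
      positivity
    · have hE0' : E.Nonempty := Finset.card_pos.mp
        (lt_of_lt_of_le (Finset.card_pos.mpr hD0) hDE)
      obtain ⟨i₀, hi₀⟩ := hE0'
      have hlb : (1:ℝ) ≤ α₂ * ‖∑ i ∈ E, e i‖ := by
        have h1 : f i₀ (∑ i ∈ E, e i) = 1 := by
          rw [f_ind hbi, if_pos hi₀]
        calc (1:ℝ) = |f i₀ (∑ i ∈ E, e i)| := by rw [h1]; norm_num
          _ ≤ ‖f i₀‖ * ‖∑ i ∈ E, e i‖ := (f i₀).le_opNorm _
          _ ≤ α₂ * ‖∑ i ∈ E, e i‖ := by gcongr; exact hα₂ i₀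
      have hub : ‖∑ i ∈ D, e i‖ ≤ (D.card : ℝ) * α₁ := by
        calc ‖∑ i ∈ D, e i‖ ≤ ∑ i ∈ D, ‖e i‖ := norm_sum_le _ _
          _ ≤ ∑ i ∈ D, α₁ := Finset.sum_le_sum fun i _ => hα₁ i
          _ = (D.card : ℝ) * α₁ := by rw [Finset.sum_const, nsmul_eq_mul]
      have hDn : (D.card : ℝ) ≤ (nseq 0 : ℝ) := by
        have : D.card ≤ nseq 0 := by omega
        exact_mod_cast this
      calc ‖∑ i ∈ D, e i‖ ≤ (D.card : ℝ) * α₁ := hub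
        _ ≤ (nseq 0 : ℝ) * α₁ := by gcongr
        _ = (nseq 0 : ℝ) * α₁ * 1 := by ring
        _ ≤ (nseq 0 : ℝ) * α₁ * (α₂ * ‖∑ i ∈ E, e i‖) :=
            mul_le_mul_of_nonneg_left hlb (by positivity)
        _ = (nseq 0 : ℝ) * α₁ * α₂ * ‖∑ i ∈ E, e i‖ := by ring
        _ ≤ ((l:ℝ) * (K * (Cd * K)) + (nseq 0 : ℝ) * α₁ * α₂) * ‖∑ i ∈ E, e i‖ := by
            nlinarith

end AuxLemmas

/-- For a sequence with bounded gaps, a semi-normalized Markushevich basis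
is `𝐧`-greedy iff it is `𝐧`-suppression unconditional and `𝐧`-democratic. -/
theorem stmt14 [CompleteSpace X]
    (e : ℕ → X) (f : ℕ → X →L[ℝ] ℝ)
    (hbi : ∀ i j, f i (e j) = if i = j then (1 : ℝ) else 0)
    (htotal : ∀ x : X, (∀ i, f i x = 0) → x = 0)
    (α₁ α₂ : ℝ) (hα₁pos : 0 < α₁) (hα₂pos : 0 < α₂)
    (hα₁ : ∀ i, ‖e i‖ ≤ α₁) (hα₂ : ∀ i, ‖f i‖ ≤ α₂)
    (hdense : Dense (↑(Submodule.span ℝ (Set.range e)) : Set X))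
    (nseq : ℕ → ℕ) (hmono : StrictMono nseq) (hn1 : 0 < nseq 0)
    (l : ℕ) (hl : 2 ≤ l) (hgaps : ∀ k, nseq (k + 1) ≤ l * nseq k) :
    (∃ C, 0 < C ∧ NGreedy e f nseq C) ↔
      ((∃ C, 0 < C ∧ NSuppUnc e f nseq C) ∧ (∃ C, 0 < C ∧ NDem e nseq C)) := by
  constructor
  · rintro ⟨C, hC, hg⟩
    constructor
    · -- suppression unconditionality
      refine ⟨C + 1, by linarith, ?_⟩
      intro x A hAk
      set M := α₂ * ‖x‖ + 1 with hM
      have hMpos : 0 < M := by positivity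
      have hbnd : ∀ j, |f j x| ≤ α₂ * ‖x‖ := fun j =>
        le_trans ((f j).le_opNorm x) (mul_le_mul_of_nonneg_right (hα₂ j) (norm_nonneg x))
      set u := x - ∑ i ∈ A, f i x • e i + ∑ i ∈ A, M • e i with hu
      have hco : ∀ j, f j u
          = f j x - (if j ∈ A then f j x else 0) + (if j ∈ A then M else 0) := by
        intro j
        rw [hu, map_add, map_sub, biorth_sum hbi, biorth_sum hbi]
      have hgre : ∀ i ∈ A, ∀ j ∉ A, |f j u| ≤ |f i u| := by
        intro i hi j hj
        rw [hco i, hco j, if_pos hi, if_pos hi, if_neg hj, if_neg hj]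
        simp only [sub_self, zero_add, add_zero, sub_zero]
        rw [abs_of_pos hMpos]
        linarith [hbnd j]
      have hyF : ∀ i ∉ A, f i (∑ j ∈ A, M • e j - ∑ j ∈ A, f j x • e j) = 0 := by
        intro i hi
        rw [map_sub, biorth_sum hbi, biorth_sum hbi, if_neg hi, if_neg hi, sub_zero]
      have hres := hg u A hAk hgre _ A le_rfl hyF
      have hGu : ∑ i ∈ A, f i u • e i = ∑ i ∈ A, M • e i :=
        Finset.sum_congr rfl fun i hi => by
          rw [hco i, if_pos hi, if_pos hi]
          congr 1
          ring
      have h1 : u - ∑ i ∈ A, f i u • e i = x - ∑ i ∈ A, f i x • e i := by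
        rw [hGu, hu]; abel
      have h2 : u - (∑ j ∈ A, M • e j - ∑ j ∈ A, f j x • e j) = x := by
        rw [hu]; abel
      rw [h1, h2] at hres
      calc ‖∑ i ∈ A, f i x • e i‖ = ‖x - (x - ∑ i ∈ A, f i x • e i)‖ := by
            rw [sub_sub_cancel]
        _ ≤ ‖x‖ + ‖x - ∑ i ∈ A, f i x • e i‖ := norm_sub_le _ _
        _ ≤ ‖x‖ + C * ‖x‖ := by linarith
        _ = (C + 1) * ‖x‖ := by ring
    · -- democracy
      refine ⟨C * C, mul_pos hC hC, ?_⟩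
      intro A B hAB hAk hBk
      obtain ⟨kB, hkB⟩ := hBk
      set N := (A ∪ B).sup id + 1 with hN
      set D := (Finset.range B.card).image (· + N) with hD
      have hDcard : D.card = B.card := by
        rw [hD, Finset.card_image_of_injective _ (add_left_injective N), Finset.card_range]
      have hfresh : ∀ i ∈ D, i ∉ A ∪ B := by
        intro i hi hmem
        obtain ⟨r, _, rfl⟩ := Finset.mem_image.mp hi
        have : r + N ≤ (A ∪ B).sup id := Finset.le_sup (f := id) hmem
        omega
      have hDA : ∀ i ∈ D, i ∉ A := fun i hi h => hfresh i hi (Finset.mem_union_left _ h)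
      have hDB : ∀ i ∈ D, i ∉ B := fun i hi h => hfresh i hi (Finset.mem_union_right _ h)
      have step1 : ‖∑ i ∈ A, e i‖ ≤ C * ‖∑ i ∈ D, e i‖ := by
        set x₁ := ∑ i ∈ A, e i + ∑ i ∈ D, e i with hx₁
        have hco : ∀ j, f j x₁
            = (if j ∈ A then 1 else 0) + (if j ∈ D then 1 else 0) := fun j => by
          rw [hx₁, map_add, f_ind hbi, f_ind hbi]
        have hgre : ∀ i ∈ D, ∀ j ∉ D, |f j x₁| ≤ |f i x₁| := by
          intro i hi j hj
          rw [hco i, hco j, if_pos hi, if_neg (hDA i hi), if_neg hj]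
          split_ifs <;> norm_num
        have hyF : ∀ i ∉ A, f i (∑ j ∈ A, e j) = 0 := fun i hi => by
          rw [f_ind hbi, if_neg hi]
        have hres := hg x₁ D ⟨kB, by rw [hDcard, hkB]⟩ hgre (∑ j ∈ A, e j) A
          (by rw [hDcard]; exact hAB) hyF
        have hG : ∑ i ∈ D, f i x₁ • e i = ∑ i ∈ D, e i :=
          Finset.sum_congr rfl fun i hi => by
            rw [hco i, if_neg (hDA i hi), if_pos hi]
            norm_num
        rw [hG] at hres
        have h1 : x₁ - ∑ i ∈ D, e i = ∑ i ∈ A, e i := by rw [hx₁]; abel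
        have h2 : x₁ - ∑ j ∈ A, e j = ∑ i ∈ D, e i := by rw [hx₁]; abel
        rw [h1, h2] at hres
        exact hres
      have step2 : ‖∑ i ∈ D, e i‖ ≤ C * ‖∑ i ∈ B, e i‖ := by
        set x₂ := ∑ i ∈ D, e i + ∑ i ∈ B, e i with hx₂
        have hco : ∀ j, f j x₂
            = (if j ∈ D then 1 else 0) + (if j ∈ B then 1 else 0) := fun j => by
          rw [hx₂, map_add, f_ind hbi, f_ind hbi]
        have hgre : ∀ i ∈ B, ∀ j ∉ B, |f j x₂| ≤ |f i x₂| := by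
          intro i hi j hj
          have hiD : i ∉ D := fun h => hDB i h hi
          rw [hco i, hco j, if_pos hi, if_neg hiD, if_neg hj]
          split_ifs <;> norm_num
        have hyF : ∀ i ∉ D, f i (∑ j ∈ D, e j) = 0 := fun i hi => by
          rw [f_ind hbi, if_neg hi]
        have hres := hg x₂ B ⟨kB, hkB⟩ hgre (∑ j ∈ D, e j) D (le_of_eq hDcard) hyF
        have hG : ∑ i ∈ B, f i x₂ • e i = ∑ i ∈ B, e i :=
          Finset.sum_congr rfl fun i hi => by
            rw [hco i, if_neg (fun h => hDB i h hi), if_pos hi]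
            norm_num
        rw [hG] at hres
        have h1 : x₂ - ∑ i ∈ B, e i = ∑ i ∈ D, e i := by rw [hx₂]; abel
        have h2 : x₂ - ∑ j ∈ D, e j = ∑ i ∈ B, e i := by rw [hx₂]; abel
        rw [h1, h2] at hres
        exact hres
      calc ‖∑ i ∈ A, e i‖ ≤ C * ‖∑ i ∈ D, e i‖ := step1
        _ ≤ C * (C * ‖∑ i ∈ B, e i‖) := by gcongr
        _ = C * C * ‖∑ i ∈ B, e i‖ := by ring
  · rintro ⟨⟨K, hK, hsup⟩, ⟨Cd0, hCd0, hdem⟩⟩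
    have hSU : ∀ (x : X) (B : Finset ℕ), ‖∑ i ∈ B, f i x • e i‖ ≤ K * ‖x‖ :=
      fullSU hbi hα₁pos hα₂pos hα₁ hα₂ hdense hmono hK hsup
    set Cd := (l:ℝ) * (K * (Cd0 * K)) + (nseq 0 : ℝ) * α₁ * α₂ with hCdDef
    have hDem : ∀ D E : Finset ℕ, D.card ≤ E.card →
        ‖∑ i ∈ D, e i‖ ≤ Cd * ‖∑ i ∈ E, e i‖ := fun D E h =>
      fullDem hbi hα₁pos hα₂pos hα₁ hα₂ hmono hn1 hgaps hSU hK.le hCd0.le hdem D E h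
    have hCdpos : 0 < Cd := by
      have h2 : (0:ℝ) < (nseq 0 : ℝ) * α₁ * α₂ :=
        mul_pos (mul_pos (by exact_mod_cast hn1) hα₁pos) hα₂pos
      have h1 : (0:ℝ) ≤ (l:ℝ) * (K * (Cd0 * K)) := by positivity
      rw [hCdDef]
      linarith
    refine ⟨1 + 2*K + 4*K*K*Cd, by positivity, ?_⟩
    intro x A hAk hgreedy y F hF hyF
    have hyrep : ∑ i ∈ A, f i y • e i + ∑ i ∈ F \ A, f i y • e i = y := by
      have hAFU : A ∪ (F \ A) = A ∪ F := Finset.union_sdiff_self_eq_union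
      have hdisj : Disjoint A (F \ A) := Finset.disjoint_sdiff
      have hkey : y - ∑ i ∈ A ∪ F, f i y • e i = 0 := by
        refine htotal _ fun j => ?_
        rw [map_sub, biorth_sum hbi]
        by_cases hj : j ∈ A ∪ F
        · rw [if_pos hj, sub_self]
        · rw [if_neg hj, hyF j (fun hjF => hj (Finset.mem_union_right _ hjF)), sub_zero]
      have hy2 : y = ∑ i ∈ A ∪ F, f i y • e i := by
        have := sub_eq_zero.mp hkey
        exact this
      rw [← Finset.sum_union hdisj, hAFU, ← hy2]
    have hid : x - ∑ i ∈ A, f i x • e i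
        = ((x - y) - ∑ i ∈ A, f i (x - y) • e i)
          - (∑ i ∈ F \ A, f i (x - y) • e i) + ∑ i ∈ F \ A, f i x • e i := by
      have hA : ∑ i ∈ A, f i (x - y) • e i
          = ∑ i ∈ A, f i x • e i - ∑ i ∈ A, f i y • e i := by
        rw [← Finset.sum_sub_distrib]
        exact Finset.sum_congr rfl fun i _ => by rw [map_sub, sub_smul]
      have hS : ∑ i ∈ F \ A, f i (x - y) • e i
          = ∑ i ∈ F \ A, f i x • e i - ∑ i ∈ F \ A, f i y • e i := by
        rw [← Finset.sum_sub_distrib]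
        exact Finset.sum_congr rfl fun i _ => by rw [map_sub, sub_smul]
      rw [hA, hS]
      have habel : ((x - y) - (∑ i ∈ A, f i x • e i - ∑ i ∈ A, f i y • e i))
          - (∑ i ∈ F \ A, f i x • e i - ∑ i ∈ F \ A, f i y • e i)
          + ∑ i ∈ F \ A, f i x • e i
          = (x - ∑ i ∈ A, f i x • e i)
            + ((∑ i ∈ A, f i y • e i + ∑ i ∈ F \ A, f i y • e i) - y) := by
        abel
      rw [habel, hyrep, sub_self, add_zero]
    have hSR : (F \ A).card ≤ (A \ F).card := by
      have h1 := Finset.card_sdiff_add_card_inter F A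
      have h2 := Finset.card_sdiff_add_card_inter A F
      have h3 : (F ∩ A).card = (A ∩ F).card := by rw [Finset.inter_comm]
      omega
    have h3bound : ‖∑ i ∈ F \ A, f i x • e i‖ ≤ 4*K*K*Cd * ‖x - y‖ := by
      rcases (F \ A).eq_empty_or_nonempty with hS0 | hS0
      · rw [hS0]
        simp only [Finset.sum_empty, norm_zero]
        positivity
      · have hR0 : (A \ F).Nonempty := Finset.card_pos.mp
          (lt_of_lt_of_le (Finset.card_pos.mpr hS0) hSR)
        have hA0 : A.Nonempty := by
          obtain ⟨i, hi⟩ := hR0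
          exact ⟨i, (Finset.mem_sdiff.mp hi).1⟩
        obtain ⟨i₁, hi₁A, hi₁min⟩ := A.exists_min_image (fun i => |f i x|) hA0
        have ht0 : 0 ≤ |f i₁ x| := abs_nonneg _
        have htgeS : ∀ i ∈ F \ A, |f i x| ≤ |f i₁ x| := fun i hi =>
          hgreedy i₁ hi₁A i (Finset.mem_sdiff.mp hi).2
        rcases eq_or_lt_of_le ht0 with ht0' | htpos
        · have hz : ∑ i ∈ F \ A, f i x • e i = 0 :=
            Finset.sum_eq_zero fun i hi => by
              have h := htgeS i hi
              rw [← ht0'] at h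
              have : f i x = 0 := abs_eq_zero.mp (le_antisymm h (abs_nonneg _))
              rw [this, zero_smul]
          rw [hz, norm_zero]
          positivity
        · set t := |f i₁ x| with htdef
          have hTbound : ∀ T ⊆ F \ A, ‖∑ i ∈ T, e i‖ ≤ K * ‖∑ j ∈ F \ A, e j‖ := by
            intro T hTs
            rw [proj_ind hbi T (F \ A) hTs]
            exact hSU _ T
          have hstep1 : ‖∑ i ∈ F \ A, f i x • e i‖ ≤ 2 * t * (K * ‖∑ j ∈ F \ A, e j‖) :=
            conv_signed e _ _ hTbound (fun i => f i x) t ht0 htgeS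
          have hdemS : ‖∑ j ∈ F \ A, e j‖ ≤ Cd * ‖∑ j ∈ A \ F, e j‖ := hDem _ _ hSR
          have hfzeq : ∀ i ∈ A \ F, f i (x - y) = f i x := fun i hi => by
            rw [map_sub, hyF i (Finset.mem_sdiff.mp hi).2, sub_zero]
          have hTbound2 : ∀ T ⊆ A \ F, ‖∑ i ∈ T, f i (x - y) • e i‖ ≤ K * ‖x - y‖ :=
            fun T _ => hSU (x - y) T
          have hfz_ne : ∀ i ∈ A \ F, f i (x - y) ≠ 0 := by
            intro i hi h0
            have h1 : t ≤ |f i x| := hi₁min i (Finset.mem_sdiff.mp hi).1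
            rw [← hfzeq i hi, h0] at h1
            simp only [abs_zero] at h1
            linarith
          have habs : ∀ i ∈ A \ F, |t / f i (x - y)| ≤ 1 := by
            intro i hi
            rw [abs_div, abs_of_pos htpos]
            have h1 : t ≤ |f i (x - y)| := by
              rw [hfzeq i hi]
              exact hi₁min i (Finset.mem_sdiff.mp hi).1
            rw [div_le_one (lt_of_lt_of_le htpos h1)]
            exact h1
          have hmain := conv_signed (fun i => f i (x - y) • e i) (K * ‖x - y‖) (A \ F)
            hTbound2 (fun i => t / f i (x - y)) 1 one_pos.le habs
          beta_reduce at hmain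
          have hsimp : ∑ i ∈ A \ F, (t / f i (x - y)) • (f i (x - y) • e i)
              = t • ∑ i ∈ A \ F, e i := by
            rw [Finset.smul_sum]
            refine Finset.sum_congr rfl fun i hi => ?_
            rw [smul_smul, div_mul_cancel₀ _ (hfz_ne i hi)]
          rw [hsimp] at hmain
          rw [norm_smul, Real.norm_eq_abs, abs_of_pos htpos] at hmain
          have hkey : t * ‖∑ i ∈ A \ F, e i‖ ≤ 2 * (K * ‖x - y‖) := by linarith
          calc ‖∑ i ∈ F \ A, f i x • e i‖ ≤ 2 * t * (K * ‖∑ j ∈ F \ A, e j‖) := hstep1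
            _ ≤ 2 * t * (K * (Cd * ‖∑ j ∈ A \ F, e j‖)) := by gcongr
            _ = 2 * K * Cd * (t * ‖∑ j ∈ A \ F, e j‖) := by ring
            _ ≤ 2 * K * Cd * (2 * (K * ‖x - y‖)) :=
                mul_le_mul_of_nonneg_left hkey (by positivity)
            _ = 4*K*K*Cd * ‖x - y‖ := by ring
    calc ‖x - ∑ i ∈ A, f i x • e i‖
        ≤ ‖(x - y) - ∑ i ∈ A, f i (x - y) • e i‖ + ‖∑ i ∈ F \ A, f i (x - y) • e i‖
          + ‖∑ i ∈ F \ A, f i x • e i‖ := by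
          rw [hid]
          refine le_trans (norm_add_le _ _) ?_
          have := norm_sub_le ((x - y) - ∑ i ∈ A, f i (x - y) • e i)
            (∑ i ∈ F \ A, f i (x - y) • e i)
          linarith
      _ ≤ (‖x - y‖ + K * ‖x - y‖) + K * ‖x - y‖ + 4*K*K*Cd * ‖x - y‖ := by
          have b1 : ‖(x - y) - ∑ i ∈ A, f i (x - y) • e i‖ ≤ ‖x - y‖ + K * ‖x - y‖ :=
            le_trans (norm_sub_le _ _) (by linarith [hSU (x - y) A])
          have b2 := hSU (x - y) (F \ A)
          linarith
      _ = (1 + 2*K + 4*K*K*Cd) * ‖x - y‖ := by ring
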